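/- Fix a field F, pairwise distinct a_1, ..., a_r ∈ F, θ_1, ..., θ_r ∈ F, and integers t, M, s, d ≥ 0 with the number of variables (d+1)·r strictly greater than M·(d+s) + M(M+1)/2. Then there exist polynomials G_1, ..., G_r ∈ F[x], not all zero, each of degree at most d, such that the polynomial F(x) = ∑_{i=1}^{r} G_i(x)·(x + a_i)^{t+M−1+s} vanishes to order at least M at every common root α ∈ F of the system {(x + a_i)^t = θ_i : 1 ≤ i ≤ r}. -/

import Mathlib

open Polynomial Finset

lemma aux_choose (e n j : ℕ) :
    (n + j).choose j * e.choose (n + j) = e.choose j * (e - j).choose n := by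
  rcases le_or_gt (n + j) e with h | h
  · rw [mul_comm, Nat.choose_mul (Nat.le_add_left j n), Nat.add_sub_cancel]
  · rw [Nat.choose_eq_zero_of_lt h, mul_zero]
    rcases le_or_gt j e with hj | hj
    · rw [Nat.choose_eq_zero_of_lt (show e - j < n by omega), mul_zero]
    · rw [Nat.choose_eq_zero_of_lt hj, zero_mul]

lemma aux_hasseDeriv_X_add_C_pow {R : Type*} [CommRing R] (a : R) (e j : ℕ) :
    hasseDeriv j ((X + C a) ^ e) = C (e.choose j : R) * (X + C a) ^ (e - j) := by
  ext n
  rw [hasseDeriv_coeff, coeff_X_add_C_pow, coeff_C_mul, coeff_X_add_C_pow]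
  have h : e - (n + j) = e - j - n := by omega
  rw [h]
  have h2 : ((n + j).choose j : R) * (e.choose (n + j) : R)
      = (e.choose j : R) * ((e - j).choose n : R) := by
    exact_mod_cast congrArg (Nat.cast : ℕ → R) (aux_choose e n j)
  linear_combination a ^ (e - j - n) * h2

lemma aux_dvd_of_hasseDeriv {R : Type*} [CommRing R] (f : R[X]) (α : R) (M : ℕ)
    (h : ∀ m < M, (hasseDeriv m f).eval α = 0) : (X - C α) ^ M ∣ f := by
  have hX : X ^ M ∣ taylor α f := by
    rw [X_pow_dvd_iff]
    intro m hm
    rw [taylor_coeff]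
    exact h m hm
  obtain ⟨g, hg⟩ := hX
  refine ⟨g.comp (X - C α), ?_⟩
  have key : f = (taylor α f).comp (X - C α) := by
    rw [taylor_apply, comp_assoc]
    simp
  rw [key, hg, mul_comp, pow_comp, X_comp]

lemma aux_degree_le_of_lt_succ {R : Type*} [Semiring R] {p : R[X]} {d : ℕ}
    (h : p.degree < ((d + 1 : ℕ) : WithBot ℕ)) : p.degree ≤ (d : ℕ) := by
  rcases eq_or_ne p 0 with rfl | hp
  · simp
  · rw [degree_eq_natDegree hp] at h ⊢
    exact_mod_cast Nat.lt_succ_iff.mp (by exact_mod_cast h)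

lemma aux_gauss (M : ℕ) : ∑ m ∈ range M, (M - m) = M * (M + 1) / 2 := by
  have h1 : ∑ m ∈ range M, (M - m) = ∑ m ∈ range M, (m + 1) := by
    rw [← Finset.sum_range_reflect (fun m => M - m) M]
    exact Finset.sum_congr rfl (fun m hm => by rw [Finset.mem_range] at hm; omega)
  have h2 : ∑ m ∈ range (M + 1), m = ∑ m ∈ range M, (m + 1) := by
    rw [Finset.sum_range_succ' (fun i => i) M]; simp
  have h3 := Finset.sum_range_id_mul_two (M + 1)
  have h4 : (M + 1) * (M + 1 - 1) = M * (M + 1) := by rw [Nat.add_sub_cancel, Nat.mul_comm]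
  omega

open Polynomial in
/-- Existence of the auxiliary polynomial: given (d+1)r > M(d+s) + M(M+1)/2, there
exist G_i, not all zero, of degree ≤ d, such that F = ∑ G_i (x+a_i)^{t+M-1+s}
vanishes to order ≥ M at every common root of the system (x+a_i)^t = θ_i. -/
theorem auxiliary_polynomial_exists {F : Type*} [Field F] (r t M s d : ℕ)
    (a θ : Fin r → F) (ha : Function.Injective a)
    (hcount : M * (d + s) + M * (M + 1) / 2 < (d + 1) * r) :
    ∃ G : Fin r → F[X], (∃ i, G i ≠ 0) ∧ (∀ i, (G i).degree ≤ (d : ℕ)) ∧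
      ∀ α : F, (∀ i, (α + a i) ^ t = θ i) →
        (X - C α) ^ M ∣ ∑ i, G i * (X + C (a i)) ^ (t + M - 1 + s) := by
  classical
  have hr : 0 < r := by
    rcases Nat.eq_zero_or_pos r with hr0 | hr
    · subst hr0; simp at hcount
    · exact hr
  rcases Nat.eq_zero_or_pos M with hM0 | hM
  · exact ⟨fun _ => 1, ⟨⟨0, hr⟩, one_ne_zero⟩, fun i => by simp,
      fun α hα => by simp [hM0]⟩
  set u := M - 1 + s with hu
  set e := t + u with he
  have hte : t + M - 1 + s = e := by omega
  let N : ℕ → ℕ := fun m => d + s + (M - m)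
  let gmap : (Fin r → Fin (d + 1) → F) → Fin r → F[X] :=
    fun c i => ((degreeLTEquiv F (d + 1)).symm (c i) : F[X])
  let Q : ℕ → (Fin r → Fin (d + 1) → F) →ₗ[F] F[X] := fun m =>
    ∑ i : Fin r, ∑ k ∈ Finset.range (m + 1),
      (θ i * (e.choose (m - k) : F)) •
        ((LinearMap.mulRight F ((X + C (a i)) ^ (u - m + k))).comp
          ((hasseDeriv k).comp
            (((degreeLT F (d + 1)).subtype.comp
                (degreeLTEquiv F (d + 1)).symm.toLinearMap).comp
              (LinearMap.proj i))))
  have hQ : ∀ (m : ℕ) (c : Fin r → Fin (d + 1) → F), Q m c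
      = ∑ i, ∑ k ∈ Finset.range (m + 1),
        (θ i * (e.choose (m - k) : F)) •
          (hasseDeriv k (gmap c i) * (X + C (a i)) ^ (u - m + k)) := by
    intro m c
    simp only [Q, gmap, LinearMap.coe_sum, Finset.sum_apply, LinearMap.smul_apply,
      LinearMap.coe_comp, Function.comp_apply, LinearMap.mulRight_apply,
      LinearMap.proj_apply, Submodule.coe_subtype, LinearEquiv.coe_coe,
      LinearEquiv.coe_toLinearMap]
  let Φ : (Fin r → Fin (d + 1) → F) →ₗ[F] ((Σ m : Fin M, Fin (N (m : ℕ))) → F) :=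
    LinearMap.pi (fun p => (lcoeff F (p.2 : ℕ)).comp (Q (p.1 : ℕ)))
  obtain ⟨c, hc0, hcker⟩ : ∃ c, c ≠ 0 ∧ Φ c = 0 := by
    by_contra hcon
    push_neg at hcon
    have hinj : Function.Injective Φ := by
      rw [← LinearMap.ker_eq_bot, LinearMap.ker_eq_bot']
      intro c hc
      by_contra hne
      exact (hcon c hne) hc
    have hle := LinearMap.finrank_le_finrank_of_injective hinj
    have hdom : Module.finrank F (Fin r → Fin (d + 1) → F) = (d + 1) * r := by
      rw [Module.finrank_pi_fintype]
      simp [Module.finrank_pi, mul_comm]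
    have hcod : Module.finrank F ((Σ m : Fin M, Fin (N (m : ℕ))) → F)
        = M * (d + s) + M * (M + 1) / 2 := by
      rw [Module.finrank_pi, Fintype.card_sigma]
      simp only [Fintype.card_fin, N]
      rw [Fin.sum_univ_eq_sum_range (fun m => d + s + (M - m)) M,
        Finset.sum_add_distrib, Finset.sum_const, Finset.card_range, aux_gauss,
        smul_eq_mul, mul_comm]
    rw [hdom, hcod] at hle
    exact absurd hcount hle.not_gt
  have hdegG : ∀ i, (gmap c i).degree ≤ (d : ℕ) := by
    intro i
    have := mem_degreeLT.mp ((degreeLTEquiv F (d + 1)).symm (c i)).2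
    exact aux_degree_le_of_lt_succ (by exact_mod_cast this)
  have hndegG : ∀ i, (gmap c i).natDegree ≤ d := fun i =>
    natDegree_le_iff_degree_le.mpr (hdegG i)
  have hdegQ : ∀ m, m < M → (Q m c).degree < ((N m : ℕ) : WithBot ℕ) := by
    intro m hm
    have hN : N m = d + s + (M - m) := rfl
    have hu2 : u = M - 1 + s := hu
    rw [hQ]
    refine lt_of_le_of_lt (degree_sum_le _ _) ?_
    rw [Finset.sup_lt_iff (by exact WithBot.bot_lt_coe _)]
    intro i _
    refine lt_of_le_of_lt (degree_sum_le _ _) ?_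
    rw [Finset.sup_lt_iff (by exact WithBot.bot_lt_coe _)]
    intro k hk
    rw [Finset.mem_range] at hk
    have hnd := hndegG i
    refine lt_of_le_of_lt (degree_smul_le _ _) ?_
    rcases le_or_gt k d with hkd | hkd
    · refine lt_of_le_of_lt (degree_mul_le _ _) ?_
      have h1 : (hasseDeriv k (gmap c i)).degree ≤ ((d - k : ℕ) : WithBot ℕ) := by
        rcases eq_or_ne (hasseDeriv k (gmap c i)) 0 with h0 | h0
        · rw [h0, degree_zero]; exact bot_le
        · rw [degree_eq_natDegree h0]
          exact_mod_cast le_trans (natDegree_hasseDeriv_le _ _) (by omega)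
      have h2 : ((X + C (a i)) ^ (u - m + k)).degree ≤ ((u - m + k : ℕ) : WithBot ℕ) := by
        refine le_trans (degree_pow_le _ _) ?_
        rw [degree_X_add_C]
        simp
      refine lt_of_le_of_lt (add_le_add h1 h2) ?_
      rw [← Nat.cast_add, Nat.cast_lt]
      omega
    · have h0 : hasseDeriv k (gmap c i) = 0 :=
        hasseDeriv_eq_zero_of_lt_natDegree _ _ (by omega)
      rw [h0, zero_mul, degree_zero]
      exact WithBot.bot_lt_coe _
  have hQzero : ∀ m, m < M → Q m c = 0 := by
    intro m hm
    ext n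
    rw [coeff_zero]
    rcases lt_or_ge n (N m) with hn | hn
    · have := congrFun hcker ⟨⟨m, hm⟩, ⟨n, hn⟩⟩
      simpa [Φ, LinearMap.pi_apply, lcoeff_apply] using this
    · exact coeff_eq_zero_of_degree_lt
        (lt_of_lt_of_le (hdegQ m hm) (by exact_mod_cast hn))
  refine ⟨gmap c, ?_, hdegG, ?_⟩
  · obtain ⟨i, hi⟩ : ∃ i, c i ≠ 0 := by
      by_contra hal; push_neg at hal; exact hc0 (funext hal)
    refine ⟨i, fun h => hi ?_⟩
    have h' : (degreeLTEquiv F (d + 1)).symm (c i) = 0 := Subtype.ext h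
    simpa using congrArg (degreeLTEquiv F (d + 1)) h'
  · intro α hα
    rw [hte]
    apply aux_dvd_of_hasseDeriv
    intro m hm
    have expand : (hasseDeriv m (∑ i, gmap c i * (X + C (a i)) ^ e)).eval α
        = ∑ i, ∑ k ∈ Finset.range (m + 1),
            (θ i * (e.choose (m - k) : F)) *
              ((hasseDeriv k (gmap c i)).eval α * (α + a i) ^ (u - m + k)) := by
      rw [map_sum, eval_finset_sum]
      refine Finset.sum_congr rfl fun i _ => ?_
      rw [hasseDeriv_mul, Finset.Nat.sum_antidiagonal_eq_sum_range_succ_mk, eval_finset_sum]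
      refine Finset.sum_congr rfl fun k hk => ?_
      rw [Finset.mem_range] at hk
      rw [aux_hasseDeriv_X_add_C_pow, eval_mul, eval_mul, eval_C, eval_pow, eval_add,
        eval_X, eval_C]
      have hexp : e - (m - k) = t + (u - m + k) := by omega
      rw [hexp, pow_add, hα i]
      ring
    have h0 : (Q m c).eval α = 0 := by rw [hQzero m hm]; simp
    rw [hQ] at h0
    rw [expand]
    simpa [eval_finset_sum, smul_eq_mul, mul_assoc] using h0
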